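/- Let X be an n×n real symmetric positive definite matrix and H an n×n real symmetric matrix. Then the function φ(t) = Tr((X + tH) · log(X + tH)), defined for t in a neighborhood of 0 where X + tH is positive definite, is differentiable at t = 0 with φ'(0) = Tr(H · (log X + I)). -/

import Mathlib

open Matrix

/-- Matrix logarithm of a real symmetric matrix, via the spectral decomposition:
apply the real logarithm to the eigenvalues. (Junk value `0` if not symmetric.) -/
noncomputable def matLog {n : Type*} [Fintype n] [DecidableEq n]
    (A : Matrix n n ℝ) : Matrix n n ℝ :=
  if h : A.IsHermitian then h.cfc Real.log else 0

/-- The von Neumann divergence `D_vN(X‖Y) = Tr(X log X − X log Y − X + Y)`. -/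
noncomputable def DvN {n : Type*} [Fintype n] [DecidableEq n]
    (X Y : Matrix n n ℝ) : ℝ :=
  (X * matLog X - X * matLog Y - X + Y).trace

/-- The symmetric (Jeffery) von Neumann divergence
`J_vN(X:Y) = (1/2)(D_vN(X‖Y) + D_vN(Y‖X))`. -/
noncomputable def JvN {n : Type*} [Fintype n] [DecidableEq n]
    (X Y : Matrix n n ℝ) : ℝ :=
  (1 / 2) * (DvN X Y + DvN Y X)

set_option linter.unusedSectionVars false

section Aux

open Finset

variable {n : Type*} [Fintype n] [DecidableEq n] {A B X H : Matrix n n ℝ}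

private lemma scalar_klein {a b : ℝ} (ha : 0 < a) (hb : 0 < b) :
    0 ≤ a * Real.log a - a * Real.log b - a + b := by
  have h1 : Real.log b - Real.log a ≤ b / a - 1 := by
    rw [← Real.log_div hb.ne' ha.ne']
    exact Real.log_le_sub_one_of_pos (div_pos hb ha)
  have h2 : a * (b / a) = b := by field_simp
  nlinarith [mul_le_mul_of_nonneg_left h1 ha.le]

private lemma scalar_upper {a b m : ℝ} (ha : 0 < a) (hm : 0 < m) (hb : m ≤ b) :
    a * Real.log a - a * Real.log b - a + b ≤ (a - b) ^ 2 / m := by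
  have hb0 : 0 < b := lt_of_lt_of_le hm hb
  have h1 : Real.log a - Real.log b ≤ a / b - 1 := by
    rw [← Real.log_div ha.ne' hb0.ne']
    exact Real.log_le_sub_one_of_pos (div_pos ha hb0)
  have key : a * Real.log a - a * Real.log b - a + b ≤ (a - b) ^ 2 / b := by
    rw [← sub_nonneg]
    have h3 : a * b * (Real.log a - Real.log b) ≤ a * b * (a / b - 1) :=
      mul_le_mul_of_nonneg_left h1 (mul_pos ha hb0).le
    have h4 : a * b * (a / b) = a ^ 2 := by field_simp
    have h5 : (a - b) ^ 2 / b * b = (a - b) ^ 2 := by field_simp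
    rw [← sub_nonneg] at h3
    have h6 : 0 < b⁻¹ := inv_pos.mpr hb0
    nlinarith [mul_le_mul_of_nonneg_left h3 h6.le]
  refine key.trans (div_le_div_of_nonneg_left (sq_nonneg _) hm hb)

private lemma trace_cfc_mul_cfc (hA : A.IsHermitian) (hB : B.IsHermitian)
    (f g : ℝ → ℝ) :
    (hA.cfc f * hB.cfc g).trace = ∑ i, ∑ j, f (hA.eigenvalues i) * g (hB.eigenvalues j) *
      ((star (hA.eigenvectorUnitary : Matrix n n ℝ) * (hB.eigenvectorUnitary : Matrix n n ℝ)) i j)^2 := by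
  set UA := (hA.eigenvectorUnitary : Matrix n n ℝ)
  set UB := (hB.eigenvectorUnitary : Matrix n n ℝ)
  set M := star UA * UB with hM
  have hstar : star UB * UA = star M := by simp [hM]
  rw [Matrix.IsHermitian.cfc, Matrix.IsHermitian.cfc, Unitary.conjStarAlgAut_apply,
    Unitary.conjStarAlgAut_apply]
  have : UA * diagonal (RCLike.ofReal ∘ f ∘ hA.eigenvalues) * star UA *
      (UB * diagonal (RCLike.ofReal ∘ g ∘ hB.eigenvalues) * star UB)
      = UA * (diagonal (f ∘ hA.eigenvalues) * M * diagonal (g ∘ hB.eigenvalues)) * star UB := by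
    simp only [hM, Matrix.mul_assoc]
    norm_num
  rw [this, Matrix.trace_mul_cycle, ← Matrix.mul_assoc, hstar, Matrix.trace_mul_comm]
  set N : Matrix n n ℝ := star M * (diagonal (f ∘ hA.eigenvalues) * M) with hN
  have h2 : ∀ j, N j j = ∑ i, f (hA.eigenvalues i) * M i j ^ 2 := by
    intro j
    simp only [hN, Matrix.mul_apply, Matrix.star_apply, star_trivial,
      Function.comp_apply, Matrix.diagonal_apply, ite_mul, zero_mul,
      Finset.sum_ite_eq, Finset.mem_univ, if_true]
    exact Finset.sum_congr rfl fun i _ => by ring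
  have h1 : (diagonal (g ∘ hB.eigenvalues) * N).trace = ∑ j, g (hB.eigenvalues j) * N j j := by
    simp [Matrix.trace, Matrix.diagonal_mul]
  rw [h1]
  simp only [h2, Finset.mul_sum]
  rw [Finset.sum_comm]
  refine Finset.sum_congr rfl fun i _ => Finset.sum_congr rfl fun j _ => by ring

private lemma row_sum' {M : Matrix n n ℝ} (h : M ∈ unitaryGroup n ℝ) (i : n) :
    ∑ j, (M i j) ^ 2 = 1 := by
  have h1 : M * star M = 1 := Unitary.mul_star_self_of_mem h
  have h2 : (M * star M) i i = (1 : Matrix n n ℝ) i i := by rw [h1]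
  simpa [Matrix.mul_apply, Matrix.star_apply, Matrix.one_apply, sq] using h2

private lemma col_sum' {M : Matrix n n ℝ} (h : M ∈ unitaryGroup n ℝ) (j : n) :
    ∑ i, (M i j) ^ 2 = 1 := by
  have h1 : star M * M = 1 := Unitary.star_mul_self_of_mem h
  have h2 : (star M * M) j j = (1 : Matrix n n ℝ) j j := by rw [h1]
  simpa [Matrix.mul_apply, Matrix.star_apply, Matrix.one_apply, sq] using h2

private lemma M_mem (hA : A.IsHermitian) (hB : B.IsHermitian) :
    star (hA.eigenvectorUnitary : Matrix n n ℝ) * (hB.eigenvectorUnitary : Matrix n n ℝ)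
    ∈ unitaryGroup n ℝ :=
  mul_mem (Unitary.star_mem (SetLike.coe_mem _)) (SetLike.coe_mem _)

private lemma myCfc_id (hA : A.IsHermitian) : hA.cfc id = A := by
  rw [Matrix.IsHermitian.cfc]
  exact hA.spectral_theorem.symm

private lemma matLog_eq (hA : A.IsHermitian) : matLog A = hA.cfc Real.log := dif_pos hA

private lemma cfc_self_mul (hA : A.IsHermitian) (f g : ℝ → ℝ) :
    hA.cfc f * hA.cfc g = hA.cfc (fun x => f x * g x) := by
  set U := (hA.eigenvectorUnitary : Matrix n n ℝ)
  have h1 : star U * U = 1 := Unitary.star_mul_self_of_mem (SetLike.coe_mem _)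
  rw [Matrix.IsHermitian.cfc, Matrix.IsHermitian.cfc, Matrix.IsHermitian.cfc,
    Unitary.conjStarAlgAut_apply, Unitary.conjStarAlgAut_apply, Unitary.conjStarAlgAut_apply]
  have key : ∀ C D : Matrix n n ℝ, (U * C * star U) * (U * D * star U) = U * (C * D) * star U := by
    intro C D
    have h2 : star U * (U * (D * star U)) = D * star U := by
      rw [← Matrix.mul_assoc, h1, Matrix.one_mul]
    simp only [Matrix.mul_assoc, h2]
  rw [key, Matrix.diagonal_mul_diagonal]
  congr 1

private lemma trace_cfc' (hA : A.IsHermitian) (f : ℝ → ℝ) :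
    (hA.cfc f).trace = ∑ i, f (hA.eigenvalues i) := by
  set U := (hA.eigenvectorUnitary : Matrix n n ℝ)
  have h1 : star U * U = 1 := Unitary.star_mul_self_of_mem (SetLike.coe_mem _)
  rw [Matrix.IsHermitian.cfc, Unitary.conjStarAlgAut_apply, Matrix.trace_mul_cycle, h1, Matrix.one_mul, Matrix.trace_diagonal]
  simp

private lemma trace_eq_sum_eig (hA : A.IsHermitian) : A.trace = ∑ i, hA.eigenvalues i := by
  conv_lhs => rw [← myCfc_id hA]
  simpa using trace_cfc' hA id

private lemma trace_mul_matLog_self (hA : A.IsHermitian) :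
    (A * matLog A).trace = ∑ i, hA.eigenvalues i * Real.log (hA.eigenvalues i) := by
  rw [matLog_eq hA, show A * hA.cfc Real.log = hA.cfc id * hA.cfc Real.log by rw [myCfc_id],
    cfc_self_mul hA]
  simpa using trace_cfc' hA (fun x => id x * Real.log x)

private lemma trace_mul_self_eq (hA : A.IsHermitian) :
    (A * A).trace = ∑ i, hA.eigenvalues i ^ 2 := by
  rw [show A * A = hA.cfc id * hA.cfc id by rw [myCfc_id], cfc_self_mul hA]
  simpa [sq] using trace_cfc' hA (fun x => id x * id x)

private lemma DvN_expand (hA : A.IsHermitian) (hB : B.IsHermitian) :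
    DvN A B = ∑ i, ∑ j,
      ((star (hA.eigenvectorUnitary : Matrix n n ℝ) * (hB.eigenvectorUnitary : Matrix n n ℝ)) i j)^2 *
      (hA.eigenvalues i * Real.log (hA.eigenvalues i)
        - hA.eigenvalues i * Real.log (hB.eigenvalues j)
        - hA.eigenvalues i + hB.eigenvalues j) := by
  set a := hA.eigenvalues
  set b := hB.eigenvalues
  set M := star (hA.eigenvectorUnitary : Matrix n n ℝ) * (hB.eigenvectorUnitary : Matrix n n ℝ)
    with hM
  have hMU : M ∈ unitaryGroup n ℝ := M_mem hA hB
  have expand : ∀ i j, (M i j)^2 * (a i * Real.log (a i) - a i * Real.log (b j) - a i + b j)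
      = (M i j)^2 * (a i * Real.log (a i)) - (a i * Real.log (b j)) * (M i j)^2
        - (M i j)^2 * a i + (M i j)^2 * b j := by intro i j; ring
  simp only [expand, Finset.sum_add_distrib, Finset.sum_sub_distrib]
  have S1 : ∑ i, ∑ j, (M i j)^2 * (a i * Real.log (a i)) = (A * matLog A).trace := by
    rw [trace_mul_matLog_self hA]
    exact Finset.sum_congr rfl fun i _ => by rw [← Finset.sum_mul, row_sum' hMU i, one_mul]
  have S2 : ∑ i, ∑ j, (a i * Real.log (b j)) * (M i j)^2 = (A * matLog B).trace := by
    rw [matLog_eq hB, show A * hB.cfc Real.log = hA.cfc id * hB.cfc Real.log by rw [myCfc_id],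
      trace_cfc_mul_cfc hA hB id Real.log]
    rfl
  have S3 : ∑ i, ∑ j, (M i j)^2 * a i = A.trace := by
    rw [trace_eq_sum_eig hA]
    exact Finset.sum_congr rfl fun i _ => by rw [← Finset.sum_mul, row_sum' hMU i, one_mul]
  have S4 : ∑ i, ∑ j, (M i j)^2 * b j = B.trace := by
    rw [trace_eq_sum_eig hB, Finset.sum_comm]
    exact Finset.sum_congr rfl fun j _ => by rw [← Finset.sum_mul, col_sum' hMU j, one_mul]
  rw [S1, S2, S3, S4, DvN]
  simp [Matrix.trace_add, Matrix.trace_sub]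

private lemma sq_diff_expand (hA : A.IsHermitian) (hB : B.IsHermitian) :
    ∑ i, ∑ j,
      ((star (hA.eigenvectorUnitary : Matrix n n ℝ) * (hB.eigenvectorUnitary : Matrix n n ℝ)) i j)^2 *
      (hA.eigenvalues i - hB.eigenvalues j)^2 = ((A - B) * (A - B)).trace := by
  set a := hA.eigenvalues
  set b := hB.eigenvalues
  set M := star (hA.eigenvectorUnitary : Matrix n n ℝ) * (hB.eigenvectorUnitary : Matrix n n ℝ)
    with hM
  have hMU : M ∈ unitaryGroup n ℝ := M_mem hA hB
  have expand : ∀ i j, (M i j)^2 * (a i - b j)^2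
      = (M i j)^2 * (a i^2) - 2 * ((a i * b j) * (M i j)^2) + (M i j)^2 * (b j^2) := by
    intro i j; ring
  simp only [expand, Finset.sum_add_distrib, Finset.sum_sub_distrib, ← Finset.mul_sum]
  have S1 : ∑ i, ∑ j, (M i j)^2 * (a i^2) = (A * A).trace := by
    rw [trace_mul_self_eq hA]
    exact Finset.sum_congr rfl fun i _ => by rw [← Finset.sum_mul, row_sum' hMU i, one_mul]
  have S2 : ∑ i, ∑ j, (a i * b j) * (M i j)^2 = (A * B).trace := by
    rw [show A * B = hA.cfc id * hB.cfc id by rw [myCfc_id, myCfc_id],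
      trace_cfc_mul_cfc hA hB id id]
    rfl
  have S3 : ∑ i, ∑ j, (M i j)^2 * (b j^2) = (B * B).trace := by
    rw [trace_mul_self_eq hB, Finset.sum_comm]
    exact Finset.sum_congr rfl fun j _ => by rw [← Finset.sum_mul, col_sum' hMU j, one_mul]
  rw [S1, S2, S3]
  have : (A - B) * (A - B) = A * A - A * B - B * A + B * B := by
    rw [Matrix.sub_mul, Matrix.mul_sub, Matrix.mul_sub]
    abel
  rw [this]
  simp only [Matrix.trace_add, Matrix.trace_sub, Matrix.trace_mul_comm B A]
  ring

private lemma DvN_nonneg' (hA : A.PosDef) (hB : B.PosDef) : 0 ≤ DvN A B := by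
  rw [DvN_expand hA.1 hB.1]
  exact Finset.sum_nonneg fun i _ => Finset.sum_nonneg fun j _ =>
    mul_nonneg (sq_nonneg _) (scalar_klein (hA.eigenvalues_pos i) (hB.eigenvalues_pos j))

private lemma DvN_le' (hA : A.PosDef) (hB : B.PosDef) {m : ℝ} (hm0 : 0 < m)
    (hm : ∀ j, m ≤ hB.1.eigenvalues j) :
    DvN A B ≤ ((A - B) * (A - B)).trace / m := by
  rw [DvN_expand hA.1 hB.1, ← sq_diff_expand hA.1 hB.1, Finset.sum_div]
  refine Finset.sum_le_sum fun i _ => ?_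
  rw [Finset.sum_div]
  refine Finset.sum_le_sum fun j _ => ?_
  rw [mul_div_assoc]
  exact mul_le_mul_of_nonneg_left (scalar_upper (hA.eigenvalues_pos i) hm0 (hm j)) (sq_nonneg _)

private lemma dot_mulVec_left (U : Matrix n n ℝ) (x w : n → ℝ) :
    x ⬝ᵥ (U *ᵥ w) = (Uᵀ *ᵥ x) ⬝ᵥ w := by
  simp only [dotProduct, Matrix.mulVec, dotProduct, Matrix.transpose_apply, Finset.mul_sum,
    Finset.sum_mul]
  rw [Finset.sum_comm]
  exact Finset.sum_congr rfl fun i _ => Finset.sum_congr rfl fun j _ => by ring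

private lemma star_eq_transpose_real (U : Matrix n n ℝ) : star U = Uᵀ := by
  ext i j
  simp [Matrix.star_apply]

private lemma quad_form_eq (hA : A.IsHermitian) (x : n → ℝ) :
    x ⬝ᵥ (A *ᵥ x) = ∑ i, hA.eigenvalues i *
      ((star (hA.eigenvectorUnitary : Matrix n n ℝ) *ᵥ x) i)^2 := by
  set U := (hA.eigenvectorUnitary : Matrix n n ℝ)
  set y := star U *ᵥ x with hy
  have hAeq : A = U * (diagonal hA.eigenvalues * star U) := by
    conv_lhs => rw [hA.spectral_theorem]
    rw [Unitary.conjStarAlgAut_apply, Matrix.mul_assoc]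
    norm_num
    rfl
  conv_lhs => rw [hAeq]
  rw [← Matrix.mulVec_mulVec, ← Matrix.mulVec_mulVec, dot_mulVec_left,
    ← star_eq_transpose_real, ← hy]
  simp only [Matrix.mulVec_diagonal, dotProduct]
  exact Finset.sum_congr rfl fun i _ => by ring

private lemma dot_self_eq (hA : A.IsHermitian) (x : n → ℝ) :
    x ⬝ᵥ x = ∑ i, ((star (hA.eigenvectorUnitary : Matrix n n ℝ) *ᵥ x) i)^2 := by
  set U := (hA.eigenvectorUnitary : Matrix n n ℝ)
  set y := star U *ᵥ x with hy
  have h1 : U * star U = 1 := Unitary.mul_star_self_of_mem (SetLike.coe_mem _)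
  have h2 : y ⬝ᵥ y = x ⬝ᵥ x := by
    rw [hy, dot_mulVec_left (star U) y x, ← star_eq_transpose_real, star_star, hy,
      Matrix.mulVec_mulVec, h1, Matrix.one_mulVec]
  rw [← h2]
  simp only [dotProduct]
  exact Finset.sum_congr rfl fun i _ => by ring

private lemma quad_lower (hX : X.PosDef) {m : ℝ} (hm : ∀ i, m ≤ hX.1.eigenvalues i) (x : n → ℝ) :
    m * (x ⬝ᵥ x) ≤ x ⬝ᵥ (X *ᵥ x) := by
  rw [quad_form_eq hX.1 x, dot_self_eq hX.1 x, Finset.mul_sum]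
  exact Finset.sum_le_sum fun i _ => mul_le_mul_of_nonneg_right (hm i) (sq_nonneg _)

private lemma abs_quad_le (H : Matrix n n ℝ) (x : n → ℝ) :
    |x ⬝ᵥ (H *ᵥ x)| ≤ (∑ i, ∑ j, |H i j|) * (x ⬝ᵥ x) := by
  have hS : x ⬝ᵥ x = ∑ k, (x k)^2 := Finset.sum_congr rfl fun k _ => by rw [sq]
  have hsq : ∀ k, (x k)^2 ≤ x ⬝ᵥ x := by
    intro k
    rw [hS]
    exact Finset.single_le_sum (fun i _ => sq_nonneg (x i)) (Finset.mem_univ k)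
  have hxx : ∀ i j, |x i * x j| ≤ x ⬝ᵥ x := by
    intro i j
    have := hsq i; have := hsq j
    have habs : |x i * x j| ≤ ((x i)^2 + (x j)^2)/2 := by
      rw [abs_mul]
      nlinarith [sq_nonneg (|x i| - |x j|), sq_abs (x i), sq_abs (x j)]
    linarith
  have h1 : x ⬝ᵥ (H *ᵥ x) = ∑ i, ∑ j, x i * H i j * x j := by
    simp only [dotProduct, Matrix.mulVec, dotProduct, Finset.mul_sum]
    exact Finset.sum_congr rfl fun i _ => Finset.sum_congr rfl fun j _ => by ring
  rw [h1, Finset.sum_mul]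
  refine (Finset.abs_sum_le_sum_abs _ _).trans (Finset.sum_le_sum fun i _ => ?_)
  rw [Finset.sum_mul]
  refine (Finset.abs_sum_le_sum_abs _ _).trans (Finset.sum_le_sum fun j _ => ?_)
  have : |x i * H i j * x j| = |H i j| * |x i * x j| := by
    rw [← abs_mul]; congr 1; ring
  rw [this]
  exact mul_le_mul_of_nonneg_left (hxx i j) (abs_nonneg _)

private lemma dot_self_pos {x : n → ℝ} (hx : x ≠ 0) : 0 < x ⬝ᵥ x := by
  have hS : x ⬝ᵥ x = ∑ k, (x k)^2 := Finset.sum_congr rfl fun k _ => by rw [sq]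
  rw [hS]
  obtain ⟨k, hk⟩ := Function.ne_iff.mp hx
  exact Finset.sum_pos' (fun i _ => sq_nonneg _) ⟨k, Finset.mem_univ k,
    lt_of_le_of_ne (sq_nonneg _) (Ne.symm (pow_ne_zero 2 hk))⟩

private lemma posDef_perturb (hX : X.PosDef) (hH : H.IsHermitian) {m t : ℝ}
    (hm : ∀ i, m ≤ hX.1.eigenvalues i) (ht : (∑ i, ∑ j, |H i j|) * |t| < m) :
    (X + t • H).PosDef := by
  refine Matrix.PosDef.of_dotProduct_mulVec_pos ?_ ?_
  · exact hX.1.add (by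
      have hT : Hᵀ = H := by ext i j; simpa using hH.apply i j
      simp [Matrix.IsHermitian, Matrix.conjTranspose_smul, hT])
  · intro x hx
    have hS : 0 < x ⬝ᵥ x := dot_self_pos hx
    have h1 : star x ⬝ᵥ ((X + t • H) *ᵥ x) = x ⬝ᵥ (X *ᵥ x) + t * (x ⬝ᵥ (H *ᵥ x)) := by
      simp [Matrix.add_mulVec, Matrix.smul_mulVec, dotProduct_add, dotProduct_smul]
    rw [h1]
    have h2 := quad_lower hX hm x
    have h3 : |t * (x ⬝ᵥ (H *ᵥ x))| ≤ ((∑ i, ∑ j, |H i j|) * |t|) * (x ⬝ᵥ x) := by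
      rw [abs_mul]
      calc |t| * |x ⬝ᵥ (H *ᵥ x)| ≤ |t| * ((∑ i, ∑ j, |H i j|) * (x ⬝ᵥ x)) :=
            mul_le_mul_of_nonneg_left (abs_quad_le H x) (abs_nonneg t)
        _ = ((∑ i, ∑ j, |H i j|) * |t|) * (x ⬝ᵥ x) := by ring
    have h4 : ((∑ i, ∑ j, |H i j|) * |t|) * (x ⬝ᵥ x) < m * (x ⬝ᵥ x) :=
      mul_lt_mul_of_pos_right ht hS
    have h5 := neg_abs_le (t * (x ⬝ᵥ (H *ᵥ x)))
    nlinarith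

end Aux

/-- The function `t ↦ Tr((X + tH) log(X + tH))` is differentiable at `t = 0` with
derivative `Tr(H (log X + I))`, for `X` symmetric positive definite and `H` symmetric. -/
theorem hasDerivAt_trace_mul_log {n : Type*} [Fintype n] [DecidableEq n]
    (X H : Matrix n n ℝ) (hX : X.PosDef) (hH : H.IsHermitian) :
    HasDerivAt (fun t : ℝ => ((X + t • H) * matLog (X + t • H)).trace)
      ((H * (matLog X + 1)).trace) 0 := by
  rcases isEmpty_or_nonempty n with hn | hn
  · have h0 : ∀ (M : Matrix n n ℝ), M.trace = 0 := fun M => by simp [Matrix.trace]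
    simp only [h0]
    exact hasDerivAt_const 0 0
  · set m := Finset.univ.inf' Finset.univ_nonempty hX.1.eigenvalues with hmdef
    have hm0 : 0 < m := by
      rw [hmdef, Finset.lt_inf'_iff]
      exact fun i _ => hX.eigenvalues_pos i
    have hm : ∀ i, m ≤ hX.1.eigenvalues i := fun i => Finset.inf'_le _ (Finset.mem_univ i)
    set C := ∑ i, ∑ j, |H i j| with hC
    have hC0 : 0 ≤ C := Finset.sum_nonneg fun i _ => Finset.sum_nonneg fun j _ => abs_nonneg _
    set D := (H * (matLog X + 1)).trace with hD
    set K := (H * H).trace with hK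
    have hK0 : 0 ≤ K := by
      rw [hK, trace_mul_self_eq hH]
      exact Finset.sum_nonneg fun i _ => sq_nonneg _
    have key : ∀ t : ℝ, ((X + t • H) * matLog (X + t • H)).trace
        - (X * matLog X).trace - t * D = DvN (X + t • H) X := by
      intro t
      rw [DvN]
      have e1 : (X + t • H) * matLog X = X * matLog X + t • (H * matLog X) := by
        rw [Matrix.add_mul, Matrix.smul_mul]
      have e2 : H * (matLog X + 1) = H * matLog X + H := by rw [Matrix.mul_add, Matrix.mul_one]
      rw [e1]
      simp only [hD, e2, Matrix.trace_add, Matrix.trace_sub, Matrix.trace_smul, smul_eq_mul]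
      ring
    rw [hasDerivAt_iff_isLittleO]
    have heq : (fun t : ℝ => ((X + t • H) * matLog (X + t • H)).trace
        - ((X + (0:ℝ) • H) * matLog (X + (0:ℝ) • H)).trace - (t - 0) • D)
        = fun t : ℝ => DvN (X + t • H) X := by
      funext t
      have h00 : X + (0:ℝ) • H = X := by simp
      rw [h00, sub_zero, smul_eq_mul, key t]
    rw [heq]
    have hO : (fun t : ℝ => DvN (X + t • H) X) =O[nhds 0] (fun t : ℝ => t ^ 2) := by
      rw [Asymptotics.isBigO_iff]
      refine ⟨K / m, ?_⟩
      have hδ : 0 < m / (C + 1) := div_pos hm0 (by linarith)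
      have hball : ∀ᶠ t in nhds (0:ℝ), |t| < m / (C + 1) := by
        have := Metric.ball_mem_nhds (0:ℝ) hδ
        filter_upwards [this] with t ht
        simpa [Real.dist_eq] using ht
      filter_upwards [hball] with t ht
      have htm : C * |t| < m := by
        have h1 : (C + 1) * |t| < (C + 1) * (m / (C + 1)) :=
          mul_lt_mul_of_pos_left ht (by linarith)
        have h2 : (C + 1) * (m / (C + 1)) = m := by field_simp
        nlinarith [abs_nonneg t]
      have hPD : (X + t • H).PosDef := posDef_perturb hX hH hm htm
      have hlow : 0 ≤ DvN (X + t • H) X := DvN_nonneg' hPD hX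
      have hup := DvN_le' hPD hX hm0 hm
      have h3 : X + t • H - X = t • H := add_sub_cancel_left X (t • H)
      have h4 : ((t • H) * (t • H)).trace = t ^ 2 * K := by
        rw [Matrix.smul_mul, Matrix.mul_smul, smul_smul, Matrix.trace_smul, hK]
        simp [sq, smul_eq_mul]
      rw [h3, h4] at hup
      rw [Real.norm_eq_abs, abs_of_nonneg hlow, Real.norm_eq_abs]
      calc DvN (X + t • H) X ≤ t ^ 2 * K / m := hup
        _ = K / m * (t ^ 2) := by ring
        _ ≤ K / m * |t ^ 2| := by
            exact mul_le_mul_of_nonneg_left (le_abs_self _) (div_nonneg hK0 hm0.le)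
    refine hO.trans_isLittleO ?_
    have := Asymptotics.isLittleO_pow_pow (𝕜 := ℝ) (m := 1) (n := 2) one_lt_two
    simpa using this
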